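/- Let σ_0 > 0, n ≥ 3, and let (Σ_k²)_{k≥0} be defined by Σ_0² = σ_0² and Σ_k² = σ_0² U_1 U_2 ⋯ U_k where U_1, …, U_k are i.i.d. χ²_{n-1}/(n-1) random variables. Then for every ε > 0 and k ≥ 1, Pr(Σ_k ≥ ε) ≤ (σ_0/ε) · exp(-k/(4n-1)). -/

import Mathlib

open MeasureTheory ProbabilityTheory Real Set

lemma gamma_sq_le (m : ℝ) (hm : 0 < m) :
    Real.Gamma (m + 1/2) ^ 2 ≤ m * Real.Gamma m ^ 2 := by
  have h1 : (0:ℝ) < m + 1 := by linarith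
  have hconv := Real.convexOn_log_Gamma
  have key := hconv.2 (Set.mem_Ioi.mpr hm) (Set.mem_Ioi.mpr h1)
    (by norm_num : (0:ℝ) ≤ 1/2) (by norm_num : (0:ℝ) ≤ 1/2) (by norm_num)
  rw [smul_eq_mul, smul_eq_mul, smul_eq_mul, smul_eq_mul] at key
  have hx : (1/2 : ℝ) * m + (1/2 : ℝ) * (m+1) = m + 1/2 := by ring
  rw [hx] at key
  have hg : 0 < Real.Gamma m := Real.Gamma_pos_of_pos hm
  have hg1 : 0 < Real.Gamma (m+1) := Real.Gamma_pos_of_pos h1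
  have hgh : 0 < Real.Gamma (m+1/2) := Real.Gamma_pos_of_pos (by linarith)
  have key2 : 2 * Real.log (Real.Gamma (m+1/2)) ≤ Real.log (Real.Gamma m) + Real.log (Real.Gamma (m+1)) := by
    simp only [Function.comp] at key; linarith
  have : Real.Gamma (m+1/2) ^ 2 ≤ Real.Gamma m * Real.Gamma (m+1) := by
    have := Real.exp_le_exp.mpr key2
    rw [Real.exp_add, Real.exp_log hg, Real.exp_log hg1] at this
    have e1 : (2:ℝ) * Real.log (Real.Gamma (m+1/2)) = Real.log (Real.Gamma (m+1/2) ^ 2) := by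
      rw [Real.log_pow]; push_cast; ring
    rw [e1, Real.exp_log (pow_pos hgh 2)] at this
    exact this
  calc Real.Gamma (m+1/2) ^ 2 ≤ Real.Gamma m * Real.Gamma (m+1) := this
    _ = m * Real.Gamma m ^ 2 := by rw [Real.Gamma_add_one hm.ne']; ring

lemma step_scalar (m : ℝ) (hm : 1 ≤ m) :
    m ^ 2 * (m + 1) * Real.exp (-2/(8*m+11)) ≤ (m + 1/2)^2 * (m * Real.exp (-2/(8*m+3))) := by
  have hm0 : (0:ℝ) < m := by linarith
  have hA : (0:ℝ) < 8*m+3 := by linarith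
  have hB : (0:ℝ) < 8*m+11 := by linarith
  obtain ⟨δ, hδval⟩ : ∃ δ:ℝ, δ = 16/((8*m+3)*(8*m+11)) := ⟨_, rfl⟩
  have hδpos : 0 < δ := by rw [hδval]; positivity
  have hδlt : δ < 1/2 := by
    rw [hδval, div_lt_div_iff₀ (by positivity) (by norm_num)]
    nlinarith
  have hmain : (1 - δ) * Real.exp δ ≤ 1 := by
    have h1 : 1 - δ ≤ Real.exp (-δ) := by
      have := Real.add_one_le_exp (-δ); linarith
    have h2 : Real.exp (-δ) * Real.exp δ = 1 := by
      rw [← Real.exp_add]; simp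
    nlinarith [Real.exp_pos δ]
  have hq : m * (m+1) ≤ (m+1/2)^2 * (1 - δ) := by
    have hfin : (m+1/2)^2 * δ ≤ 1/4 := by
      rw [hδval, mul_div_assoc']
      rw [div_le_iff₀ (by positivity)]
      nlinarith
    nlinarith
  have key : m * (m+1) * Real.exp δ ≤ (m + 1/2)^2 := by
    calc m * (m+1) * Real.exp δ ≤ ((m+1/2)^2 * (1-δ)) * Real.exp δ := by
          apply mul_le_mul_of_nonneg_right hq (Real.exp_pos δ).le
      _ = (m+1/2)^2 * ((1-δ) * Real.exp δ) := by ring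
      _ ≤ (m+1/2)^2 * 1 := by
          apply mul_le_mul_of_nonneg_left hmain (by positivity)
      _ = (m+1/2)^2 := by ring
  have hsplit : Real.exp (-2/(8*m+11)) = Real.exp δ * Real.exp (-2/(8*m+3)) := by
    rw [← Real.exp_add]; congr 1; rw [hδval]; field_simp; ring
  rw [hsplit]
  calc m^2*(m+1)*(Real.exp δ * Real.exp (-2/(8*m+3)))
      = (m*(m+1)*Real.exp δ) * (m * Real.exp (-2/(8*m+3))) := by ring
    _ ≤ (m+1/2)^2 * (m * Real.exp (-2/(8*m+3))) := by
        apply mul_le_mul_of_nonneg_right key (by positivity)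

lemma gamma_iter (K : ℕ) : ∀ m : ℝ, 1 ≤ m →
    Real.Gamma (m + 1/2) ^ 2
      ≤ m * Real.exp (-2/(8*m+3)) * Real.exp (2/(8*(m+K)+3)) * Real.Gamma m ^ 2 := by
  induction K with
  | zero =>
      intro m hm
      have : m * Real.exp (-2/(8*m+3)) * Real.exp (2/(8*(m+(0:ℕ))+3)) = m := by
        push_cast
        rw [mul_assoc, ← Real.exp_add, add_zero,
          show -2/(8*m+3) + 2/(8*m+3) = 0 by ring, Real.exp_zero, mul_one]
      rw [this]
      exact gamma_sq_le m (by linarith)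
  | succ K ih =>
      intro m hm
      have hm0 : (0:ℝ) < m := by linarith
      have h1 := ih (m+1) (by linarith)
      -- rewrite Gamma (m+1+1/2) and Gamma (m+1)
      have e1 : Real.Gamma (m + 1 + 1/2) = (m + 1/2) * Real.Gamma (m + 1/2) := by
        rw [show m + 1 + 1/2 = (m + 1/2) + 1 by ring, Real.Gamma_add_one (by positivity)]
      have e2 : Real.Gamma (m + 1) = m * Real.Gamma m := Real.Gamma_add_one hm0.ne'
      rw [e1, e2, mul_pow, mul_pow] at h1
      -- h1 : (m+1/2)^2 * Γ(m+1/2)^2 ≤ (m+1) * exp(-2/(8(m+1)+3)) * exp(2/(8(m+1+K)+3)) * (m^2 * Γ m ^2)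
      have hGpos : (0:ℝ) < Real.Gamma m ^ 2 := pow_pos (Real.Gamma_pos_of_pos hm0) 2
      have hplus : (0:ℝ) < (m + 1/2)^2 := by positivity
      have e3 : 8*((m:ℝ)+1)+3 = 8*m+11 := by ring
      have e4 : (m:ℝ)+1+(K:ℝ) = m + ((K:ℕ)+1 : ℕ) := by push_cast; ring
      rw [e3, e4] at h1
      have step := step_scalar m hm
      -- multiply step by exp(2/(8(m+K+1)+3)) * Γ m ^2 ≥ 0
      have hmul : m^2 * (m+1) * Real.exp (-2/(8*m+11)) * (Real.exp (2/(8*(m+((K:ℕ)+1:ℕ))+3)) * Real.Gamma m ^2)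
          ≤ (m+1/2)^2 * (m * Real.exp (-2/(8*m+3))) * (Real.exp (2/(8*(m+((K:ℕ)+1:ℕ))+3)) * Real.Gamma m ^2) := by
        apply mul_le_mul_of_nonneg_right step (by positivity)
      have h2 : (m+1/2)^2 * Real.Gamma (m+1/2)^2
          ≤ (m+1/2)^2 * (m * Real.exp (-2/(8*m+3)) * Real.exp (2/(8*(m+((K:ℕ)+1:ℕ))+3)) * Real.Gamma m ^2) := by
        calc (m+1/2)^2 * Real.Gamma (m+1/2)^2
            ≤ (m+1) * Real.exp (-2/(8*m+11)) * Real.exp (2/(8*(m+((K:ℕ)+1:ℕ))+3)) * (m^2 * Real.Gamma m ^2) := h1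
          _ = m^2 * (m+1) * Real.exp (-2/(8*m+11)) * (Real.exp (2/(8*(m+((K:ℕ)+1:ℕ))+3)) * Real.Gamma m ^2) := by ring
          _ ≤ (m+1/2)^2 * (m * Real.exp (-2/(8*m+3))) * (Real.exp (2/(8*(m+((K:ℕ)+1:ℕ))+3)) * Real.Gamma m ^2) := hmul
          _ = (m+1/2)^2 * (m * Real.exp (-2/(8*m+3)) * Real.exp (2/(8*(m+((K:ℕ)+1:ℕ))+3)) * Real.Gamma m ^2) := by ring
      exact le_of_mul_le_mul_left h2 hplus

lemma gamma_ratio_sq (m : ℝ) (hm : 1 ≤ m) :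
    Real.Gamma (m + 1/2) ^ 2 ≤ m * Real.exp (-2/(8*m+3)) * Real.Gamma m ^ 2 := by
  have hm0 : (0:ℝ) < m := by linarith
  have hlim : Filter.Tendsto
      (fun K : ℕ => m * Real.exp (-2/(8*m+3)) * Real.exp (2/(8*(m+K)+3)) * Real.Gamma m ^ 2)
      Filter.atTop (nhds (m * Real.exp (-2/(8*m+3)) * 1 * Real.Gamma m ^ 2)) := by
    apply Filter.Tendsto.mul_const
    apply Filter.Tendsto.const_mul
    have h0 : Filter.Tendsto (fun K : ℕ => 2/(8*(m+K)+3)) Filter.atTop (nhds 0) := by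
      apply Filter.Tendsto.div_atTop tendsto_const_nhds
      apply Filter.tendsto_atTop_add_const_right
      apply Filter.Tendsto.const_mul_atTop (by norm_num : (0:ℝ) < 8)
      exact Filter.tendsto_atTop_add_const_left _ _ tendsto_natCast_atTop_atTop
    have := (Real.continuous_exp.tendsto 0).comp h0
    simpa [Function.comp_def] using this
  have hle : ∀ K : ℕ, Real.Gamma (m + 1/2) ^ 2
      ≤ m * Real.exp (-2/(8*m+3)) * Real.exp (2/(8*(m+K)+3)) * Real.Gamma m ^ 2 :=
    fun K => gamma_iter K m hm
  have := ge_of_tendsto' hlim hle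
  simpa using this

lemma gamma_ratio (m : ℝ) (hm : 1 ≤ m) :
    Real.Gamma (m + 1/2) ≤ Real.sqrt m * Real.exp (-1/(8*m+3)) * Real.Gamma m := by
  have hm0 : (0:ℝ) < m := by linarith
  have hG : (0:ℝ) < Real.Gamma m := Real.Gamma_pos_of_pos hm0
  have hGh : (0:ℝ) < Real.Gamma (m + 1/2) := Real.Gamma_pos_of_pos (by linarith)
  have hsq : (Real.sqrt m * Real.exp (-1/(8*m+3)) * Real.Gamma m)^2
      = m * Real.exp (-2/(8*m+3)) * Real.Gamma m ^ 2 := by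
    rw [mul_pow, mul_pow, Real.sq_sqrt hm0.le, pow_two, ← Real.exp_add,
      show -1/(8*m+3) + -1/(8*m+3) = -2/(8*m+3) by ring]
  have h := gamma_ratio_sq m hm
  rw [← hsq] at h
  have := Real.sqrt_le_sqrt h
  rwa [Real.sqrt_sq hGh.le, Real.sqrt_sq (by positivity)] at this

lemma sqrt_moment (c : ℝ) (hc : 2 ≤ c) :
    (∫⁻ x : ℝ, ENNReal.ofReal (Real.sqrt |x|)
      ∂(volume.withDensity (fun u => ENNReal.ofReal
        (if 0 < u then (c/2) ^ (c/2) / Real.Gamma (c/2) * u ^ (c/2 - 1) * Real.exp (-c * u / 2)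
         else 0))))
    = ENNReal.ofReal (Real.Gamma (c/2 + 1/2) / (Real.Gamma (c/2) * Real.sqrt (c/2))) := by
  have hm : (1:ℝ) ≤ c/2 := by linarith
  have hm0 : (0:ℝ) < c/2 := by linarith
  set m : ℝ := c/2 with hmdef
  have hGm : 0 < Real.Gamma m := Real.Gamma_pos_of_pos hm0
  set dens : ℝ → ℝ := fun u =>
    if 0 < u then m ^ m / Real.Gamma m * u ^ (m - 1) * Real.exp (-c * u / 2) else 0 with hdens
  have hdens_meas : Measurable dens := by
    apply Measurable.ite measurableSet_Ioi
    · exact ((measurable_id.pow_const _).const_mul _).mul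
        ((measurable_id.const_mul _).div_const _).exp
    · exact measurable_const
  have hg_meas : Measurable fun x : ℝ => ENNReal.ofReal (Real.sqrt |x|) :=
    (measurable_id.abs.sqrt).ennreal_ofReal
  rw [lintegral_withDensity_eq_lintegral_mul volume
    hdens_meas.ennreal_ofReal hg_meas]
  rw [← lintegral_add_compl _ (measurableSet_Ioi (a := (0:ℝ)))]
  have hzero : ∫⁻ x in (Ioi (0:ℝ))ᶜ,
      ((fun u => ENNReal.ofReal (dens u)) * fun x => ENNReal.ofReal (Real.sqrt |x|)) x = 0 := by
    rw [setLIntegral_congr_fun (measurableSet_Ioi (a := (0:ℝ))).compl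
      (fun x hx => ?_), lintegral_zero]
    have : ¬ (0 < x) := by simpa [compl_Ioi] using hx
    simp [hdens, this]
  rw [hzero, add_zero]
  -- now the positive part
  set F : ℝ → ℝ := fun x => m ^ m / Real.Gamma m * (x ^ (m + 1/2 - 1) * Real.exp (-(m * x)))
    with hF
  have hcongr : ∫⁻ x in Ioi (0:ℝ),
      ((fun u => ENNReal.ofReal (dens u)) * fun x => ENNReal.ofReal (Real.sqrt |x|)) x
      = ∫⁻ x in Ioi (0:ℝ), ENNReal.ofReal (F x) := by
    apply setLIntegral_congr_fun (measurableSet_Ioi (a := (0:ℝ)))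
    intro x hx
    have hx0 : 0 < x := hx
    simp only [Pi.mul_apply]
    rw [← ENNReal.ofReal_mul (by simp [hdens]; positivity)]
    congr 1
    rw [hdens, hF]
    simp only [if_pos hx0, abs_of_pos hx0]
    rw [Real.sqrt_eq_rpow]
    rw [show -c * x / 2 = -(m * x) by rw [hmdef]; ring]
    rw [show m + 1/2 - 1 = (m - 1) + 1/2 by ring, Real.rpow_add hx0]
    ring
  rw [hcongr]
  -- integrability
  have hint : IntegrableOn F (Ioi (0:ℝ)) volume := by
    apply Integrable.const_mul
    have := integrableOn_rpow_mul_exp_neg_mul_rpow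
      (show (-1:ℝ) < m + 1/2 - 1 by linarith) (by norm_num : (0:ℝ) < 1) hm0
    apply this.congr_fun ?_ (measurableSet_Ioi (a := (0:ℝ)))
    intro x hx
    simp only [Real.rpow_one, neg_mul]
  rw [← ofReal_integral_eq_lintegral_ofReal hint]
  · congr 1
    rw [hF]
    rw [integral_const_mul, Real.integral_rpow_mul_exp_neg_mul_Ioi (by linarith : (0:ℝ) < m + 1/2) hm0]
    rw [one_div, Real.inv_rpow hm0.le, Real.rpow_add hm0, ← Real.sqrt_eq_rpow]
    field_simp
  · apply (ae_restrict_iff' (measurableSet_Ioi (a := (0:ℝ)))).mpr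
    apply ae_of_all
    intro x hx
    have : (0:ℝ) < x := hx
    rw [hF]
    positivity

lemma lintegral_finset_prod_indep {Ω : Type*} [MeasurableSpace Ω] {P : Measure Ω}
    [IsProbabilityMeasure P] (V : ℕ → Ω → ENNReal) (hmeas : ∀ i, Measurable (V i))
    (hind : iIndepFun V P) (s : Finset ℕ) :
    ∫⁻ ω, ∏ i ∈ s, V i ω ∂P = ∏ i ∈ s, ∫⁻ ω, V i ω ∂P := by
  classical
  induction s using Finset.induction_on with
  | empty => simp
  | insert _ _ hnot ih =>
      rename_i a s
      have hindep : IndepFun (fun ω => ∏ j ∈ s, V j ω) (V a) P := by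
        have h := hind.indepFun_finset_prod_of_notMem hmeas hnot
        have heq : (∏ j ∈ s, V j) = fun ω => ∏ j ∈ s, V j ω := by
          funext ω; simp [Finset.prod_apply]
        rwa [heq] at h
      have hmul := lintegral_mul_eq_lintegral_mul_lintegral_of_indepFun
        (Finset.measurable_prod s (fun i _ => hmeas i)) (hmeas a) hindep
      calc ∫⁻ ω, ∏ i ∈ insert a s, V i ω ∂P
          = ∫⁻ ω, ((fun ω => ∏ j ∈ s, V j ω) * V a) ω ∂P := by
            apply lintegral_congr; intro ω
            rw [Finset.prod_insert hnot]; simp [mul_comm]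
        _ = (∫⁻ ω, ∏ j ∈ s, V j ω ∂P) * ∫⁻ ω, V a ω ∂P := hmul
        _ = ∏ i ∈ insert a s, ∫⁻ ω, V i ω ∂P := by
            rw [Finset.prod_insert hnot, mul_comm, ih]

lemma sqrt_finset_prod (s : Finset ℕ) (f : ℕ → ℝ) (hf : ∀ i ∈ s, 0 ≤ f i) :
    Real.sqrt (∏ i ∈ s, f i) = ∏ i ∈ s, Real.sqrt (f i) := by
  classical
  induction s using Finset.induction_on with
  | empty => simp
  | insert _ _ hnot ih =>
      rename_i a s
      rw [Finset.prod_insert hnot, Finset.prod_insert hnot,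
        Real.sqrt_mul (hf a (Finset.mem_insert_self a s)),
        ih (fun i hi => hf i (Finset.mem_insert_of_mem hi))]

theorem gaussian_recursive_collapse_rate
    (n : ℕ) (hn : 3 ≤ n) (σ₀ : ℝ) (hσ₀ : 0 < σ₀)
    (Ω : Type*) [MeasurableSpace Ω] (P : Measure Ω) [IsProbabilityMeasure P]
    (U : ℕ → Ω → ℝ) (hUmeas : ∀ i, Measurable (U i))
    (hUindep : iIndepFun U P)
    (hUlaw : ∀ i, Measure.map (U i) P =
      volume.withDensity (fun u => ENNReal.ofReal
        (if 0 < u then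
          (((n : ℝ) - 1) / 2) ^ (((n : ℝ) - 1) / 2) / Real.Gamma (((n : ℝ) - 1) / 2) *
            u ^ (((n : ℝ) - 1) / 2 - 1) * Real.exp (-((n : ℝ) - 1) * u / 2)
         else 0)))
    (ε : ℝ) (hε : 0 < ε) (k : ℕ) (hk : 1 ≤ k) :
    P {ω | ε ≤ Real.sqrt (σ₀ ^ 2 * ∏ i ∈ Finset.Icc 1 k, U i ω)}
      ≤ ENNReal.ofReal (σ₀ / ε * Real.exp (-(k : ℝ) / (4 * n - 1))) := by
  have hc : (2:ℝ) ≤ (n:ℝ) - 1 := by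
    have : (3:ℝ) ≤ (n:ℝ) := by exact_mod_cast hn
    linarith
  set c : ℝ := (n:ℝ) - 1 with hcdef
  set m : ℝ := c/2 with hmdef
  have hm : (1:ℝ) ≤ m := by rw [hmdef]; linarith
  have hm0 : (0:ℝ) < m := by linarith
  -- the sqrt-abs map
  set g : ℝ → ENNReal := fun x => ENNReal.ofReal (Real.sqrt |x|) with hgdef
  have hg_meas : Measurable g := (measurable_id.abs.sqrt).ennreal_ofReal
  set V : ℕ → Ω → ENNReal := fun i ω => g (U i ω) with hVdef
  have hVmeas : ∀ i, Measurable (V i) := fun i => hg_meas.comp (hUmeas i)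
  have hVindep : iIndepFun V P :=
    hUindep.comp (fun _ => g) (fun _ => hg_meas)
  -- the target random variable
  set X : Ω → ℝ := fun ω => Real.sqrt (σ₀ ^ 2 * ∏ i ∈ Finset.Icc 1 k, U i ω) with hXdef
  have hX_meas : Measurable X := by
    apply Measurable.sqrt
    exact (Finset.measurable_prod _ (fun i _ => hUmeas i)).const_mul _
  set G : Ω → ENNReal := fun ω => ENNReal.ofReal (X ω) with hGdef
  have hG_meas : Measurable G := hX_meas.ennreal_ofReal
  -- event rewrite
  have hevent : {ω | ε ≤ X ω} = {ω | ENNReal.ofReal ε ≤ G ω} := by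
    ext ω
    simp only [Set.mem_setOf_eq, hGdef]
    exact (ENNReal.ofReal_le_ofReal_iff (Real.sqrt_nonneg _)).symm
  -- Markov
  have hMarkov := mul_meas_ge_le_lintegral₀ (μ := P) hG_meas.aemeasurable (ENNReal.ofReal ε)
  show P {ω | ε ≤ X ω} ≤ ENNReal.ofReal (σ₀ / ε * Real.exp (-(k:ℝ) / (4 * (n:ℝ) - 1)))
  -- pointwise bound
  have hpoint : ∀ ω, G ω ≤ ENNReal.ofReal σ₀ * ∏ i ∈ Finset.Icc 1 k, V i ω := by
    intro ω
    have h1 : X ω ≤ σ₀ * ∏ i ∈ Finset.Icc 1 k, Real.sqrt |U i ω| := by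
      rw [hXdef]
      have h2 : σ₀ ^ 2 * ∏ i ∈ Finset.Icc 1 k, U i ω
          ≤ σ₀ ^ 2 * ∏ i ∈ Finset.Icc 1 k, |U i ω| := by
        apply mul_le_mul_of_nonneg_left _ (sq_nonneg σ₀)
        calc ∏ i ∈ Finset.Icc 1 k, U i ω ≤ |∏ i ∈ Finset.Icc 1 k, U i ω| := le_abs_self _
          _ = ∏ i ∈ Finset.Icc 1 k, |U i ω| := Finset.abs_prod _ _
      calc Real.sqrt (σ₀ ^ 2 * ∏ i ∈ Finset.Icc 1 k, U i ω)
          ≤ Real.sqrt (σ₀ ^ 2 * ∏ i ∈ Finset.Icc 1 k, |U i ω|) := Real.sqrt_le_sqrt h2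
        _ = σ₀ * ∏ i ∈ Finset.Icc 1 k, Real.sqrt |U i ω| := by
            rw [Real.sqrt_mul (sq_nonneg σ₀), Real.sqrt_sq hσ₀.le,
              sqrt_finset_prod _ _ (fun i _ => abs_nonneg _)]
    calc G ω ≤ ENNReal.ofReal (σ₀ * ∏ i ∈ Finset.Icc 1 k, Real.sqrt |U i ω|) :=
          ENNReal.ofReal_le_ofReal h1
      _ = ENNReal.ofReal σ₀ * ∏ i ∈ Finset.Icc 1 k, V i ω := by
          rw [ENNReal.ofReal_mul hσ₀.le,
            ENNReal.ofReal_prod_of_nonneg (fun i _ => Real.sqrt_nonneg _)]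
  -- bound each moment
  have hmoment : ∀ i, ∫⁻ ω, V i ω ∂P ≤ ENNReal.ofReal (Real.exp (-1/(4*(n:ℝ)-1))) := by
    intro i
    have h1 : ∫⁻ ω, V i ω ∂P = ∫⁻ x, g x ∂(Measure.map (U i) P) :=
      (lintegral_map hg_meas (hUmeas i)).symm
    rw [h1, hUlaw i]
    have h2 := sqrt_moment c hc
    rw [hcdef] at h2
    rw [h2]
    apply ENNReal.ofReal_le_ofReal
    have hG : 0 < Real.Gamma (((n:ℝ)-1)/2) := Real.Gamma_pos_of_pos (by linarith)
    have hs : 0 < Real.sqrt (((n:ℝ)-1)/2) := Real.sqrt_pos.mpr (by linarith)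
    rw [div_le_iff₀ (by positivity)]
    have h3 := gamma_ratio (((n:ℝ)-1)/2) (by linarith)
    have e48 : 8*(((n:ℝ)-1)/2)+3 = 4*(n:ℝ)-1 := by ring
    rw [e48] at h3
    calc Real.Gamma (((n:ℝ)-1)/2 + 1/2)
        ≤ Real.sqrt (((n:ℝ)-1)/2) * Real.exp (-1/(4*(n:ℝ)-1)) * Real.Gamma (((n:ℝ)-1)/2) := h3
      _ = Real.exp (-1/(4*(n:ℝ)-1)) * (Real.Gamma (((n:ℝ)-1)/2) * Real.sqrt (((n:ℝ)-1)/2)) := by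
          ring
  -- total integral bound
  have hInt : ∫⁻ ω, G ω ∂P ≤ ENNReal.ofReal (σ₀ * Real.exp (-(k:ℝ)/(4*(n:ℝ)-1))) := by
    calc ∫⁻ ω, G ω ∂P
        ≤ ∫⁻ ω, ENNReal.ofReal σ₀ * ∏ i ∈ Finset.Icc 1 k, V i ω ∂P :=
          lintegral_mono hpoint
      _ = ENNReal.ofReal σ₀ * ∫⁻ ω, ∏ i ∈ Finset.Icc 1 k, V i ω ∂P := lintegral_const_mul _
          (Finset.measurable_prod _ (fun i _ => hVmeas i))
      _ = ENNReal.ofReal σ₀ * ∏ i ∈ Finset.Icc 1 k, ∫⁻ ω, V i ω ∂P := by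
          rw [lintegral_finset_prod_indep V hVmeas hVindep]
      _ ≤ ENNReal.ofReal σ₀ * ∏ i ∈ Finset.Icc 1 k,
            ENNReal.ofReal (Real.exp (-1/(4*(n:ℝ)-1))) := by
          apply mul_le_mul_right
          exact Finset.prod_le_prod' (fun i _ => hmoment i)
      _ = ENNReal.ofReal (σ₀ * Real.exp (-(k:ℝ)/(4*(n:ℝ)-1))) := by
          rw [Finset.prod_const, Nat.card_Icc]
          simp only [Nat.add_sub_cancel]
          rw [← ENNReal.ofReal_pow (Real.exp_nonneg _), ← Real.exp_nat_mul,
            ← ENNReal.ofReal_mul hσ₀.le]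
          congr 2
          field_simp
  -- conclude
  have hεne : ENNReal.ofReal ε ≠ 0 := by
    simp [ENNReal.ofReal_eq_zero, not_le, hε]
  have hεtop : ENNReal.ofReal ε ≠ ⊤ := ENNReal.ofReal_ne_top
  have hfinal : P {ω | ε ≤ X ω} ≤ ENNReal.ofReal (σ₀ * Real.exp (-(k:ℝ)/(4*(n:ℝ)-1))) / ENNReal.ofReal ε := by
    rw [hevent]
    rw [ENNReal.le_div_iff_mul_le (Or.inl hεne) (Or.inl hεtop)]
    calc P {ω | ENNReal.ofReal ε ≤ G ω} * ENNReal.ofReal ε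
        = ENNReal.ofReal ε * P {ω | ENNReal.ofReal ε ≤ G ω} := mul_comm _ _
      _ ≤ ∫⁻ ω, G ω ∂P := hMarkov
      _ ≤ _ := hInt
  calc P {ω | ε ≤ X ω} ≤ _ := hfinal
    _ = ENNReal.ofReal (σ₀ / ε * Real.exp (-(k:ℝ)/(4*(n:ℝ)-1))) := by
        rw [← ENNReal.ofReal_div_of_pos hε]
        congr 1
        field_simp
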